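/- Let I be a finite totally ordered index set partitioned into consecutive blocks J⁽¹⁾,…,J⁽q⁾ (the ordering is compatible with the partition: indices in J⁽ᵏ⁾ precede those in J⁽ˡ⁾ whenever k < l), and let Θ ∈ ℝ^{I×I} be symmetric positive definite. For 1 ≤ k ≤ q write I⁽ᵏ⁾ := J⁽¹⁾∪⋯∪J⁽ᵏ⁾, Θ⁽ᵏ⁾ := Θ restricted to I⁽ᵏ⁾×I⁽ᵏ⁾, A⁽ᵏ⁾ := (Θ⁽ᵏ⁾)⁻¹, and B⁽ᵏ⁾ := A⁽ᵏ⁾_{k,k} (the (k,k) block of A⁽ᵏ⁾). Let D be the block diagonal matrix with diagonal blocks B⁽¹⁾⁻¹,…,B⁽q⁾⁻¹, and let L̄ be the inverse of the block lower-triangular matrix whose diagonal blocks are identity matrices and whose (k,l) block for l < k equals B⁽ᵏ⁾⁻¹ A⁽ᵏ⁾_{k,l}. (a) Θ = L̄ D L̄ᵀ. (b) If L̃ is the lower-triangular Cholesky factor of D (the unique lower-triangular matrix with positive diagonal and L̃L̃ᵀ = D), then L̄L̃ is the lower-triangular Cholesky factor of Θ, i.e. L̄L̃ is lower triangular with positive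 diagonal and Θ = (L̄L̃)(L̄L̃)ᵀ. -/

import Mathlib

open Matrix

variable {N q : ℕ}

/-- `Θ⁽ᵏ⁾`: the restriction of `Θ` to the index set `I⁽ᵏ⁾ = J⁽¹⁾ ∪ ⋯ ∪ J⁽ᵏ⁾`,
where the blocks are the level sets of `b : Fin N → Fin q`. -/
noncomputable def thetaK (b : Fin N → Fin q) (Θ : Matrix (Fin N) (Fin N) ℝ) (k : Fin q) :
    Matrix {i : Fin N // b i ≤ k} {i : Fin N // b i ≤ k} ℝ :=
  Θ.submatrix Subtype.val Subtype.val

/-- `A⁽ᵏ⁾ := (Θ⁽ᵏ⁾)⁻¹`. -/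
noncomputable def AK (b : Fin N → Fin q) (Θ : Matrix (Fin N) (Fin N) ℝ) (k : Fin q) :
    Matrix {i : Fin N // b i ≤ k} {i : Fin N // b i ≤ k} ℝ :=
  (thetaK b Θ k)⁻¹

/-- `B⁽ᵏ⁾ := A⁽ᵏ⁾_{k,k}`, the `(k,k)` block of `A⁽ᵏ⁾`. -/
noncomputable def BK (b : Fin N → Fin q) (Θ : Matrix (Fin N) (Fin N) ℝ) (k : Fin q) :
    Matrix {i : Fin N // b i = k} {i : Fin N // b i = k} ℝ :=
  fun i j => AK b Θ k ⟨i.1, i.2.le⟩ ⟨j.1, j.2.le⟩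

/-- The block diagonal matrix `D` with diagonal blocks `B⁽¹⁾⁻¹, …, B⁽q⁾⁻¹`. -/
noncomputable def Dmat (b : Fin N → Fin q) (Θ : Matrix (Fin N) (Fin N) ℝ) :
    Matrix (Fin N) (Fin N) ℝ :=
  fun i j => if h : b i = b j then (BK b Θ (b i))⁻¹ ⟨i, rfl⟩ ⟨j, h.symm⟩ else 0

/-- The block lower-triangular matrix with identity diagonal blocks whose
`(k,l)` block for `l < k` is `B⁽ᵏ⁾⁻¹ A⁽ᵏ⁾_{k,l}`. -/
noncomputable def Mlow (b : Fin N → Fin q) (Θ : Matrix (Fin N) (Fin N) ℝ) :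
    Matrix (Fin N) (Fin N) ℝ :=
  fun i j =>
    if b i = b j then (if i = j then 1 else 0)
    else if h : b j < b i then
      ∑ m : {x : Fin N // b x = b i},
        (BK b Θ (b i))⁻¹ ⟨i, rfl⟩ m * AK b Θ (b i) ⟨m.1, m.2.le⟩ ⟨j, h.le⟩
    else 0

/-- `L̄`, the inverse of the block lower-triangular matrix `Mlow`. -/
noncomputable def LbarMat (b : Fin N → Fin q) (Θ : Matrix (Fin N) (Fin N) ℝ) :
    Matrix (Fin N) (Fin N) ℝ :=
  (Mlow b Θ)⁻¹

lemma posdef_submatrix_inj {n m : Type*} [Fintype m] [Fintype n] [DecidableEq n] [DecidableEq m]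
    {M : Matrix n n ℝ} (hM : M.PosDef) (f : m → n) (hf : Function.Injective f) :
    (M.submatrix f f).PosDef := by
  exact hM.submatrix hf

section basic
variable {N q : ℕ} {b : Fin N → Fin q} {Θ : Matrix (Fin N) (Fin N) ℝ}

lemma thetaK_posdef (hΘ : Θ.PosDef) (k : Fin q) : (thetaK b Θ k).PosDef :=
  posdef_submatrix_inj hΘ _ Subtype.val_injective

lemma AK_posdef (hΘ : Θ.PosDef) (k : Fin q) : (AK b Θ k).PosDef := (thetaK_posdef hΘ k).inv

lemma BK_posdef (hΘ : Θ.PosDef) (k : Fin q) : (BK b Θ k).PosDef := by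
  have : BK b Θ k = (AK b Θ k).submatrix (fun i => ⟨i.1, i.2.le⟩) (fun i => ⟨i.1, i.2.le⟩) := rfl
  rw [this]
  exact posdef_submatrix_inj (AK_posdef hΘ k) _
    (fun i j h => by simpa [Subtype.ext_iff] using h)

lemma AK_mul_thetaK (hΘ : Θ.PosDef) (k : Fin q) : AK b Θ k * thetaK b Θ k = 1 :=
  nonsing_inv_mul _ (isUnit_iff_ne_zero.mpr (thetaK_posdef hΘ k).det_pos.ne')

lemma BKinv_mul_BK (hΘ : Θ.PosDef) (k : Fin q) : (BK b Θ k)⁻¹ * BK b Θ k = 1 :=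
  nonsing_inv_mul _ (isUnit_iff_ne_zero.mpr (BK_posdef hΘ k).det_pos.ne')

lemma Mlow_apply_le (hΘ : Θ.PosDef) {i j : Fin N} (h : b j ≤ b i) :
    Mlow b Θ i j = ∑ m : {x : Fin N // b x = b i},
      (BK b Θ (b i))⁻¹ ⟨i, rfl⟩ m * AK b Θ (b i) ⟨m.1, m.2.le⟩ ⟨j, h⟩ := by
  unfold Mlow
  by_cases hbij : b i = b j
  · rw [if_pos hbij]
    have hA : ∀ m : {x : Fin N // b x = b i},
        AK b Θ (b i) ⟨m.1, m.2.le⟩ ⟨j, h⟩ = BK b Θ (b i) m ⟨j, hbij.symm⟩ := fun m => rfl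
    simp_rw [hA]
    have h2 := congrFun (congrFun (BKinv_mul_BK hΘ (b i)) ⟨i, rfl⟩) ⟨j, hbij.symm⟩
    rw [mul_apply] at h2
    rw [h2, one_apply]
    simp [Subtype.ext_iff]
  · rw [if_neg hbij, dif_pos (lt_of_le_of_ne h (fun hc => hbij hc.symm))]

lemma Mlow_eq_zero {i j : Fin N} (h : ¬ b j ≤ b i) : Mlow b Θ i j = 0 := by
  unfold Mlow
  rw [if_neg (fun hc => h hc.ge), dif_neg (fun hc => h hc.le)]

lemma Mlow_diag (i : Fin N) : Mlow b Θ i i = 1 := by simp [Mlow]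

end basic

section key
variable {N q : ℕ} {b : Fin N → Fin q} {Θ : Matrix (Fin N) (Fin N) ℝ}

lemma sum_restrict (i : Fin N) (g : Fin N → ℝ) (hg : ∀ m, ¬ b m ≤ b i → g m = 0) :
    ∑ m, g m = ∑ m : {x : Fin N // b x ≤ b i}, g m.1 := by
  rw [← Finset.sum_filter_of_ne (p := fun x => b x ≤ b i)
      (fun m _ hm => by_contra fun hc => hm (hg m hc)),
    Finset.sum_subtype (p := fun x => b x ≤ b i) _ (fun x => by simp) g]

lemma MlowTheta (hΘ : Θ.PosDef) {i j : Fin N} (h : b j ≤ b i) :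
    (Mlow b Θ * Θ) i j
      = if hh : b j = b i then (BK b Θ (b i))⁻¹ ⟨i, rfl⟩ ⟨j, hh⟩ else 0 := by
  rw [mul_apply]
  rw [sum_restrict i _ (fun m hm => by rw [Mlow_eq_zero hm, zero_mul])]
  have hstep : ∀ m : {x : Fin N // b x ≤ b i},
      Mlow b Θ i m.1 * Θ m.1 j
        = ∑ s : {x : Fin N // b x = b i},
            (BK b Θ (b i))⁻¹ ⟨i, rfl⟩ s *
              (AK b Θ (b i) ⟨s.1, s.2.le⟩ m * thetaK b Θ (b i) m ⟨j, h⟩) := by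
    intro m
    rw [Mlow_apply_le hΘ m.2, Finset.sum_mul]
    exact Finset.sum_congr rfl fun s _ => by
      show _ = _ * (_ * Θ m.1 j)
      ring
  simp_rw [hstep]
  rw [Finset.sum_comm]
  simp_rw [← Finset.mul_sum]
  have hAΘ : ∀ s : {x : Fin N // b x = b i},
      (∑ m : {x : Fin N // b x ≤ b i},
        AK b Θ (b i) ⟨s.1, s.2.le⟩ m * thetaK b Θ (b i) m ⟨j, h⟩)
        = if s.1 = j then 1 else 0 := by
    intro s
    rw [← mul_apply, AK_mul_thetaK hΘ (b i), one_apply]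
    simp [Subtype.ext_iff]
  simp_rw [hAΘ]
  by_cases hh : b j = b i
  · rw [dif_pos hh]
    have hcond : ∀ s : {x : Fin N // b x = b i}, (s.1 = j) = (s = ⟨j, hh⟩) := by
      intro s; simp [Subtype.ext_iff]
    simp_rw [hcond, mul_ite, mul_one, mul_zero]
    simp
  · rw [dif_neg hh]
    refine Finset.sum_eq_zero fun s _ => ?_
    rw [if_neg (fun hc : s.1 = j => hh (hc ▸ s.2)), mul_zero]
end key

section key2
variable {N q : ℕ} {b : Fin N → Fin q} {Θ : Matrix (Fin N) (Fin N) ℝ}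

lemma MTMt_lt (hΘ : Θ.PosDef) {i j : Fin N} (hji : b j < b i) :
    (Mlow b Θ * Θ * (Mlow b Θ)ᵀ) i j = 0 := by
  rw [mul_apply]
  refine Finset.sum_eq_zero fun m _ => ?_
  rw [transpose_apply]
  by_cases hm : b m ≤ b j
  · rw [MlowTheta hΘ (hm.trans hji.le),
      dif_neg (fun hc : b m = b i => by rw [hc] at hm; exact hji.not_ge hm), zero_mul]
  · rw [Mlow_eq_zero hm, mul_zero]

lemma MTMt_eq (hΘ : Θ.PosDef) {i j : Fin N} (hji : b j = b i) :
    (Mlow b Θ * Θ * (Mlow b Θ)ᵀ) i j = Dmat b Θ i j := by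
  rw [mul_apply]
  have hterm : ∀ m, (Mlow b Θ * Θ) i m * (Mlow b Θ)ᵀ m j
      = if j = m then Dmat b Θ i j else 0 := by
    intro m
    rw [transpose_apply]
    by_cases hm : b m ≤ b j
    · rcases hm.lt_or_eq with hlt | heq
      · rw [MlowTheta hΘ (hlt.le.trans hji.le),
          dif_neg (fun hc : b m = b i => by rw [hc, ← hji] at hlt; exact lt_irrefl _ hlt),
          zero_mul, if_neg (fun hc => by rw [← hc] at hlt; exact lt_irrefl _ hlt)]
      · have hmi : b m = b i := heq.trans hji
        rw [MlowTheta hΘ hmi.le, dif_pos hmi]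
        show _ * Mlow b Θ j m = _
        unfold Mlow
        rw [if_pos (hji.trans hmi.symm)]
        by_cases hjm : j = m
        · subst hjm
          rw [if_pos rfl, mul_one, if_pos rfl, Dmat, dif_pos hji.symm]
        · rw [if_neg hjm, mul_zero, if_neg hjm]
    · rw [show Mlow b Θ j m = 0 from Mlow_eq_zero hm, mul_zero,
        if_neg (fun hc : j = m => hm (le_of_eq (congrArg b hc.symm)))]
  simp_rw [hterm]
  simp

lemma theta_symm (hΘ : Θ.PosDef) : Θᵀ = Θ := by
  rw [← conjTranspose_eq_transpose_of_trivial]; exact hΘ.1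

lemma MTMt (hΘ : Θ.PosDef) : Mlow b Θ * Θ * (Mlow b Θ)ᵀ = Dmat b Θ := by
  have hsymm : (Mlow b Θ * Θ * (Mlow b Θ)ᵀ)ᵀ = Mlow b Θ * Θ * (Mlow b Θ)ᵀ := by
    rw [transpose_mul, transpose_mul, transpose_transpose, theta_symm hΘ, mul_assoc]
  ext i j
  rcases lt_trichotomy (b j) (b i) with hlt | heq | hgt
  · rw [MTMt_lt hΘ hlt, Dmat, dif_neg (fun hc : b i = b j => hlt.ne (hc.symm)), ]
  · exact MTMt_eq hΘ heq
  · have h1 : (Mlow b Θ * Θ * (Mlow b Θ)ᵀ) i j = (Mlow b Θ * Θ * (Mlow b Θ)ᵀ) j i := by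
      have h2 := congrFun (congrFun hsymm j) i
      rwa [transpose_apply] at h2
    rw [h1, MTMt_lt hΘ hgt, Dmat, dif_neg (fun hc : b i = b j => hgt.ne hc)]

lemma Mlow_tri (hb : Monotone b) {i j : Fin N} (hij : i < j) : Mlow b Θ i j = 0 := by
  unfold Mlow
  by_cases hc : b i = b j
  · rw [if_pos hc, if_neg hij.ne]
  · rw [if_neg hc, dif_neg (fun hlt => hlt.not_ge (hb hij.le))]

lemma Mlow_det (hb : Monotone b) : (Mlow b Θ).det = 1 := by
  have ht : (Mlow b Θ)ᵀ.BlockTriangular id := fun i j hij => Mlow_tri hb hij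
  rw [← det_transpose, det_of_upperTriangular ht]
  simp [Mlow_diag]
end key2


/-- Block Cholesky decomposition `Θ = L̄ D L̄ᵀ`, and if `L̃` is the
lower-triangular Cholesky factor of `D`, then `L̄ L̃` is the lower-triangular
Cholesky factor of `Θ`. -/
theorem block_cholesky_decomposition
    (b : Fin N → Fin q) (hb : Monotone b)
    (Θ : Matrix (Fin N) (Fin N) ℝ) (hΘ : Θ.PosDef)
    (Lt : Matrix (Fin N) (Fin N) ℝ)
    (hLt_tri : ∀ i j : Fin N, i < j → Lt i j = 0)
    (hLt_diag : ∀ i : Fin N, 0 < Lt i i)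
    (hLt_chol : Lt * Ltᵀ = Dmat b Θ) :
    Θ = LbarMat b Θ * Dmat b Θ * (LbarMat b Θ)ᵀ ∧
    ((∀ i j : Fin N, i < j → (LbarMat b Θ * Lt) i j = 0) ∧
      (∀ i : Fin N, 0 < (LbarMat b Θ * Lt) i i) ∧
      Θ = (LbarMat b Θ * Lt) * (LbarMat b Θ * Lt)ᵀ) := by
  set M := Mlow b Θ with hM
  have hdet : IsUnit M.det := by rw [hM, Mlow_det hb]; exact isUnit_one
  have hdetT : IsUnit Mᵀ.det := by rwa [det_transpose]
  have hkey : M * Θ * Mᵀ = Dmat b Θ := MTMt hΘ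
  have hLbar : LbarMat b Θ = M⁻¹ := rfl
  have hMMinv : M * M⁻¹ = 1 := mul_nonsing_inv _ hdet
  have hMinvM : M⁻¹ * M = 1 := nonsing_inv_mul _ hdet
  have hTinv : (M⁻¹)ᵀ = (Mᵀ)⁻¹ := transpose_nonsing_inv M
  have part_a : Θ = LbarMat b Θ * Dmat b Θ * (LbarMat b Θ)ᵀ := by
    rw [hLbar, ← hkey, hTinv]
    rw [mul_assoc M Θ Mᵀ, ← mul_assoc M⁻¹ M (Θ * Mᵀ), hMinvM, one_mul,
      mul_assoc, mul_nonsing_inv _ hdetT, mul_one]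
  have htri : ∀ i j : Fin N, i < j → M⁻¹ i j = 0 := by
    have : Invertible Mᵀ := Mᵀ.invertibleOfIsUnitDet hdetT
    have h1 : Mᵀ.BlockTriangular id := fun i j hij => Mlow_tri hb hij
    have h2 := blockTriangular_inv_of_blockTriangular h1
    intro i j hij
    have h3 := h2 (i := j) (j := i) hij
    rwa [← transpose_nonsing_inv, transpose_apply] at h3
  have hdiag : ∀ i : Fin N, M⁻¹ i i = 1 := by
    intro i
    have h1 := congrFun (congrFun hMMinv i) i
    rw [mul_apply, one_apply_eq] at h1
    rw [Finset.sum_eq_single i] at h1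
    · rw [hM, Mlow_diag, one_mul] at h1
      exact h1
    · intro m _ hm
      rcases lt_or_gt_of_ne hm with hlt | hgt
      · rw [htri m i hlt, mul_zero]
      · rw [hM, Mlow_tri hb hgt, zero_mul]
    · simp
  refine ⟨part_a, ?_, ?_, ?_⟩
  · intro i j hij
    rw [hLbar, mul_apply]
    refine Finset.sum_eq_zero fun m _ => ?_
    rcases le_or_gt m i with hle | hgt
    · rw [hLt_tri m j (lt_of_le_of_lt hle hij), mul_zero]
    · rw [htri i m hgt, zero_mul]
  · intro i
    rw [hLbar, mul_apply, Finset.sum_eq_single i]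
    · rw [hdiag, one_mul]; exact hLt_diag i
    · intro m _ hm
      rcases lt_or_gt_of_ne hm with hlt | hgt
      · rw [hLt_tri m i hlt, mul_zero]
      · rw [htri i m hgt, zero_mul]
    · simp
  · have hfin : Θ = LbarMat b Θ * (Lt * Ltᵀ) * (LbarMat b Θ)ᵀ := by
      rw [hLt_chol]; exact part_a
    rw [transpose_mul]
    conv_lhs => rw [hfin]
    simp only [Matrix.mul_assoc]
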